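/- Let γ > 1 and β > 0. Define a sequence of functions H_k on [0,∞) by H_1(t) = ∫_0^t e^{βs} ds and H_k(t) = ∫_0^t e^{βs} H_{k-1}(s)^γ ds for k ≥ 2. Then for all t ≥ β^{-1} log 2 and all k ≥ 1, H_k(t) ≥ (2β)^{-(1+γ+⋯+γ^{k-1})} · ∏_{j=2}^{k} ((γ^j − 1)/(γ − 1))^{-γ^{k-j}} · e^{βt(1+γ+⋯+γ^{k-1})}. -/

import Mathlib

open Real MeasureTheory Finset

-- integral of exp(βs) * (exp(βs)-1)^p
private lemma int_key (β p : ℝ) (hβ : 0 < β) (hp : 0 ≤ p) (t : ℝ) (ht : 0 ≤ t) :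
    ∫ s in (0:ℝ)..t, Real.exp (β * s) * (Real.exp (β * s) - 1) ^ p
      = (Real.exp (β * t) - 1) ^ (p + 1) / (β * (p + 1)) := by
  have hcont : Continuous (fun s : ℝ => Real.exp (β * s) * (Real.exp (β * s) - 1) ^ p) := by
    apply Continuous.mul
    · exact Real.continuous_exp.comp (continuous_const.mul continuous_id)
    · exact ((Real.continuous_exp.comp (continuous_const.mul continuous_id)).sub
        continuous_const).rpow_const (fun x => Or.inr hp)
  have hp1 : (0:ℝ) < p + 1 := by linarith
  have hderiv : ∀ s ∈ Set.uIcc (0:ℝ) t,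
      HasDerivAt (fun s => (Real.exp (β * s) - 1) ^ (p + 1) / (β * (p + 1)))
        (Real.exp (β * s) * (Real.exp (β * s) - 1) ^ p) s := by
    intro s _
    have h1 : HasDerivAt (fun s : ℝ => Real.exp (β * s) - 1) (Real.exp (β * s) * β) s := by
      have := ((hasDerivAt_id s).const_mul β).exp
      simpa using this.sub_const 1
    have h2 := h1.rpow_const (p := p + 1) (Or.inr (by linarith))
    have h3 := h2.div_const (β * (p + 1))
    refine h3.congr_deriv ?_
    have : p + 1 - 1 = p := by ring
    rw [this]
    field_simp
  rw [intervalIntegral.integral_eq_sub_of_hasDerivAt hderiv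
    (hcont.intervalIntegrable _ _)]
  simp [Real.zero_rpow (ne_of_gt hp1)]

theorem stmt0 (γ β : ℝ) (hγ : 1 < γ) (hβ : 0 < β)
    (H : ℕ → ℝ → ℝ)
    (hH1 : ∀ t : ℝ, H 1 t = ∫ s in (0:ℝ)..t, Real.exp (β * s))
    (hHk : ∀ k : ℕ, 2 ≤ k → ∀ t : ℝ,
      H k t = ∫ s in (0:ℝ)..t, Real.exp (β * s) * (H (k - 1) s) ^ γ)
    (t : ℝ) (ht : β⁻¹ * Real.log 2 ≤ t) (k : ℕ) (hk : 1 ≤ k) :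
    H k t ≥ (2 * β) ^ (-(∑ j ∈ Finset.range k, γ ^ j))
      * (∏ j ∈ Finset.Icc 2 k, ((γ ^ j - 1) / (γ - 1)) ^ (-(γ ^ (k - j))))
      * Real.exp (β * t * (∑ j ∈ Finset.range k, γ ^ j)) := by
  have hγ0 : (0:ℝ) < γ := by linarith
  set S : ℕ → ℝ := fun k => ∑ j ∈ Finset.range k, γ ^ j with hS
  set D : ℕ → ℝ := fun k => β ^ (-(S k)) * ∏ j ∈ Finset.Icc 2 k, (S j) ^ (-(γ ^ (k - j))) with hD
  have hSpos : ∀ k, 1 ≤ k → 0 < S k := by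
    intro k hk
    apply Finset.sum_pos (fun j _ => pow_pos hγ0 j)
    exact Finset.nonempty_range_iff.mpr (by omega)
  have hS1 : S 1 = 1 := by simp [hS]
  have hSrec : ∀ k : ℕ, S (k + 1) = 1 + γ * S k := by
    intro k; simp only [hS, geom_sum_succ]; ring
  have hDpos : ∀ k, 0 < D k := by
    intro k
    apply mul_pos (Real.rpow_pos_of_pos hβ _)
    apply Finset.prod_pos
    intro j hj
    simp only [Finset.mem_Icc] at hj
    exact Real.rpow_pos_of_pos (hSpos j (by omega)) _
  have hDrec : ∀ k : ℕ, 1 ≤ k → D (k + 1) = (D k) ^ γ / (β * S (k + 1)) := by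
    intro k hk
    have hDk : (D k) ^ γ = β ^ (-(γ * S k)) * ∏ j ∈ Finset.Icc 2 k, (S j) ^ (-(γ ^ (k + 1 - j))) := by
      rw [hD]
      rw [Real.mul_rpow (le_of_lt (Real.rpow_pos_of_pos hβ _))
        (le_of_lt (Finset.prod_pos (fun j hj => Real.rpow_pos_of_pos
          (hSpos j (by simp only [Finset.mem_Icc] at hj; omega)) _)))]
      rw [← Real.rpow_mul hβ.le, ← Real.finset_prod_rpow _ _
        (fun i hi => (Real.rpow_pos_of_pos (hSpos i (by simp only [Finset.mem_Icc] at hi; omega)) _).le)]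
      congr 1
      · ring_nf
      · apply Finset.prod_congr rfl
        intro i hi
        simp only [Finset.mem_Icc] at hi
        rw [← Real.rpow_mul (hSpos i (by omega)).le]
        congr 1
        have : k + 1 - i = (k - i) + 1 := by omega
        rw [this, pow_succ]
        ring
    have hIcc : Finset.Icc 2 (k + 1) = insert (k + 1) (Finset.Icc 2 k) := by
      ext x; simp only [Finset.mem_Icc, Finset.mem_insert]; omega
    rw [hD]
    simp only [hIcc]
    rw [Finset.prod_insert (by simp)]
    rw [hDk]
    have h1 : β ^ (-(S (k + 1))) = β ^ (-(γ * S k)) * β⁻¹ := by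
      rw [← Real.rpow_neg_one β, ← Real.rpow_add hβ]
      congr 1
      rw [hSrec]; ring
    have h2 : S (k + 1) ^ (-(γ ^ (k + 1 - (k + 1)))) = (S (k + 1))⁻¹ := by
      simp [Real.rpow_neg_one]
    rw [h2, h1]
    have hne : β * S (k + 1) ≠ 0 := by positivity
    rw [eq_div_iff hne]
    field_simp
    exact mul_div_cancel_left₀ _ (hSpos (k + 1) (by omega)).ne'
  have main : ∀ k : ℕ, 1 ≤ k → Continuous (H k) ∧
      ∀ s : ℝ, 0 ≤ s → D k * (Real.exp (β * s) - 1) ^ (S k) ≤ H k s := by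
    intro k hk
    induction k, hk using Nat.le_induction with
    | base =>
      have hfun : ∀ u : ℝ, H 1 u = (Real.exp (β * u) - 1) / β := by
        intro u
        rw [hH1 u]
        have hderiv : ∀ s ∈ Set.uIcc (0:ℝ) u,
            HasDerivAt (fun s => Real.exp (β * s) / β) (Real.exp (β * s)) s := by
          intro s _
          have h1 : HasDerivAt (fun s : ℝ => Real.exp (β * s)) (Real.exp (β * s) * β) s := by
            simpa using ((hasDerivAt_id s).const_mul β).exp
          have := h1.div_const β
          refine this.congr_deriv ?_
          field_simp
        rw [intervalIntegral.integral_eq_sub_of_hasDerivAt hderiv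
          ((Real.continuous_exp.comp (continuous_const.mul continuous_id)).intervalIntegrable _ _)]
        simp
        ring
      constructor
      · have : H 1 = fun u => (Real.exp (β * u) - 1) / β := funext hfun
        rw [this]
        fun_prop
      · intro s hs
        rw [hfun s]
        have hD1 : D 1 = β⁻¹ := by
          rw [hD]
          have : Finset.Icc 2 1 = (∅ : Finset ℕ) := by
            apply Finset.Icc_eq_empty; omega
          simp [this, hS1, Real.rpow_neg_one]
        rw [hD1, hS1, Real.rpow_one]
        rw [div_eq_inv_mul]
    | succ k hk ih =>
      obtain ⟨hc, hb⟩ := ih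
      have hHk1 : ∀ u : ℝ, H (k+1) u
          = ∫ s in (0:ℝ)..u, Real.exp (β * s) * (H k s) ^ γ := by
        intro u
        have h := hHk (k+1) (by omega) u
        simpa using h
      have hgcont : Continuous (fun s : ℝ => Real.exp (β * s) * (H k s) ^ γ) :=
        (Real.continuous_exp.comp (continuous_const.mul continuous_id)).mul
          (hc.rpow_const (fun x => Or.inr hγ0.le))
      constructor
      · have : H (k+1) = fun u => ∫ s in (0:ℝ)..u, Real.exp (β * s) * (H k s) ^ γ :=
          funext hHk1
        rw [this]
        exact intervalIntegral.continuous_primitive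
          (fun a b => hgcont.intervalIntegrable a b) 0
      · intro u hu
        have hSk0 : 0 ≤ γ * S k := mul_nonneg hγ0.le (hSpos k hk).le
        have hlowcont : Continuous
            (fun s : ℝ => Real.exp (β * s) * (D k * (Real.exp (β * s) - 1) ^ (S k)) ^ γ) := by
          apply Continuous.mul
          · exact Real.continuous_exp.comp (continuous_const.mul continuous_id)
          · apply Continuous.rpow_const _ (fun x => Or.inr hγ0.le)
            apply Continuous.mul continuous_const
            exact ((Real.continuous_exp.comp (continuous_const.mul continuous_id)).sub
              continuous_const).rpow_const (fun x => Or.inr (hSpos k hk).le)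
        have hmono : (∫ s in (0:ℝ)..u,
              Real.exp (β * s) * (D k * (Real.exp (β * s) - 1) ^ (S k)) ^ γ)
            ≤ ∫ s in (0:ℝ)..u, Real.exp (β * s) * (H k s) ^ γ := by
          apply intervalIntegral.integral_mono_on hu (hlowcont.intervalIntegrable _ _)
            (hgcont.intervalIntegrable _ _)
          intro s hs
          have h0 : 0 ≤ Real.exp (β * s) - 1 := by
            have : (1:ℝ) ≤ Real.exp (β * s) := Real.one_le_exp (mul_nonneg hβ.le hs.1)
            linarith
          apply mul_le_mul_of_nonneg_left _ (Real.exp_nonneg _)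
          exact Real.rpow_le_rpow (mul_nonneg (hDpos k).le (Real.rpow_nonneg h0 _))
            (hb s hs.1) hγ0.le
        have hcalc : (∫ s in (0:ℝ)..u,
              Real.exp (β * s) * (D k * (Real.exp (β * s) - 1) ^ (S k)) ^ γ)
            = D k ^ γ * ((Real.exp (β * u) - 1) ^ (γ * S k + 1) / (β * (γ * S k + 1))) := by
          rw [← int_key β (γ * S k) hβ hSk0 u hu, ← intervalIntegral.integral_const_mul]
          apply intervalIntegral.integral_congr
          intro s hs
          have hs0 : 0 ≤ s := by
            rw [Set.uIcc_of_le hu] at hs; exact hs.1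
          have h0 : 0 ≤ Real.exp (β * s) - 1 := by
            have : (1:ℝ) ≤ Real.exp (β * s) := Real.one_le_exp (mul_nonneg hβ.le hs0)
            linarith
          simp only
          rw [Real.mul_rpow (hDpos k).le (Real.rpow_nonneg h0 _), ← Real.rpow_mul h0,
            mul_comm (S k) γ]
          ring
        rw [hHk1 u]
        refine le_trans (le_of_eq ?_) hmono
        rw [hcalc]
        have he : γ * S k + 1 = S (k + 1) := by rw [hSrec]; ring
        rw [he, hDrec k hk]
        ring
  have h0t : (0:ℝ) ≤ t := by
    have h1 : (0:ℝ) ≤ β⁻¹ * Real.log 2 := by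
      apply mul_nonneg (by positivity)
      apply Real.log_nonneg; norm_num
    linarith
  have h2e : (2:ℝ) ≤ Real.exp (β * t) := by
    rw [← Real.exp_log (by norm_num : (0:ℝ) < 2)]
    apply Real.exp_le_exp.mpr
    calc Real.log 2 = β * (β⁻¹ * Real.log 2) := by field_simp
    _ ≤ β * t := mul_le_mul_of_nonneg_left ht hβ.le
  have hX : Real.exp (β * t) / 2 ≤ Real.exp (β * t) - 1 := by linarith
  have hprod : (∏ j ∈ Finset.Icc 2 k, ((γ ^ j - 1) / (γ - 1)) ^ (-(γ ^ (k - j))))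
      = ∏ j ∈ Finset.Icc 2 k, (S j) ^ (-(γ ^ (k - j))) := by
    apply Finset.prod_congr rfl
    intro j _
    rw [hS]
    simp only
    rw [geom_sum_eq hγ.ne' j]
  rw [ge_iff_le, hprod]
  have e1 : Real.exp (β * t * S k) = Real.exp (β * t) ^ (S k) := Real.exp_mul _ _
  have e2 : ((2:ℝ) * β) ^ (-(S k)) = 2 ^ (-(S k)) * β ^ (-(S k)) :=
    Real.mul_rpow (by norm_num) hβ.le
  have e3 : (Real.exp (β * t) / 2) ^ (S k)
      = Real.exp (β * t) ^ (S k) * 2 ^ (-(S k)) := by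
    rw [Real.div_rpow (Real.exp_nonneg _) (by norm_num), Real.rpow_neg (by norm_num)]
    ring
  calc (2 * β) ^ (-(S k)) * (∏ j ∈ Finset.Icc 2 k, (S j) ^ (-(γ ^ (k - j))))
        * Real.exp (β * t * S k)
      = D k * (Real.exp (β * t) / 2) ^ (S k) := by
        rw [e2, hD, e1, e3]; ring
    _ ≤ D k * (Real.exp (β * t) - 1) ^ (S k) := by
        apply mul_le_mul_of_nonneg_left _ (hDpos k).le
        exact Real.rpow_le_rpow (by positivity) hX (hSpos k hk).le
    _ ≤ H k t := (main k hk).2 t h0t
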